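/- Let y : ℝ → ℝ be twice differentiable and satisfy the Painlevé II equation y''(x) = x·y(x) + 2·y(x)³ for all x ∈ ℝ. Then the function u(x,t) := x/(2t) − t^{-2/3}·y(−x t^{-1/3})², defined for x ∈ ℝ and t > 0, solves the KdV equation ∂_t u + 2 u ∂_x u + (1/6) ∂_x³ u = 0 at every point of ℝ × (0,∞). -/

import Mathlib

/-- If `y` is twice differentiable and satisfies the Painlevé II equation
`y'' = x·y + 2·y³` on `ℝ`, then `u(x,t) := x/(2t) − t^{-2/3}·y(−x t^{-1/3})²` solves the KdV
equation `∂_t u + 2 u ∂_x u + (1/6) ∂_x³ u = 0` on `ℝ × (0,∞)`. -/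
theorem stmt_1 (y : ℝ → ℝ)
    (hy1 : Differentiable ℝ y) (hy2 : Differentiable ℝ (deriv y))
    (hPII : ∀ x : ℝ, deriv (deriv y) x = x * y x + 2 * (y x) ^ 3)
    (u : ℝ → ℝ → ℝ)
    (hu : ∀ x t : ℝ, 0 < t →
      u x t = x / (2 * t) - t ^ (-(2 / 3) : ℝ) * (y (-x * t ^ (-(1 / 3) : ℝ))) ^ 2) :
    ∀ x t : ℝ, 0 < t →
      deriv (fun s => u x s) t + 2 * u x t * deriv (fun x' => u x' t) x
        + (1 / 6) * iteratedDeriv 3 (fun x' => u x' t) x = 0 := by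
  intro x t ht
  have ht' : t ≠ 0 := ht.ne'
  set a : ℝ := t ^ (-(1/3) : ℝ) with ha
  have hb : t ^ (-(2/3) : ℝ) = a ^ 2 := by
    rw [ha, ← Real.rpow_natCast (t ^ (-(1/3):ℝ)) 2, ← Real.rpow_mul ht.le]; norm_num
  have h4 : t ^ ((-(1/3):ℝ) - 1) = a ^ 4 := by
    rw [ha, ← Real.rpow_natCast (t ^ (-(1/3):ℝ)) 4, ← Real.rpow_mul ht.le]; norm_num
  have h5 : t ^ ((-(2/3):ℝ) - 1) = a ^ 5 := by
    rw [ha, ← Real.rpow_natCast (t ^ (-(1/3):ℝ)) 5, ← Real.rpow_mul ht.le]; norm_num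
  have hta : a ^ 3 * t = 1 := by
    rw [ha, ← Real.rpow_natCast (t ^ (-(1/3):ℝ)) 3, ← Real.rpow_mul ht.le]
    norm_num
    rw [Real.rpow_neg_one]
    exact inv_mul_cancel₀ ht'
  -- third derivative of y
  have hy2eq : deriv (deriv y) = fun s => s * y s + 2 * (y s) ^ 3 := funext hPII
  have hD3 : ∀ s : ℝ, HasDerivAt (deriv (deriv y))
      (y s + s * deriv y s + 6 * (y s) ^ 2 * deriv y s) s := by
    intro s
    rw [hy2eq]
    have h1 : HasDerivAt (fun s : ℝ => s * y s) (1 * y s + s * deriv y s) s :=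
      (hasDerivAt_id s).mul (hy1 s).hasDerivAt
    have h2 := ((hy1 s).hasDerivAt.pow 3).const_mul (2 : ℝ)
    refine (h1.add h2).congr_deriv ?_
    push_cast
    ring
  -- inner linear map in x
  have hinner : ∀ p : ℝ, HasDerivAt (fun q : ℝ => -q * a) (-1 * a) p := fun p =>
    ((hasDerivAt_id p).neg).mul_const a
  -- spatial functions
  set F : ℝ → ℝ := fun p => p / (2 * t) - t ^ (-(2/3) : ℝ) * (y (-p * a)) ^ 2 with hF
  set F2 : ℝ → ℝ := fun p => 1 / (2 * t) + 2 * a ^ 3 * (y (-p * a) * deriv y (-p * a)) with hF2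
  set F3 : ℝ → ℝ := fun p =>
    -2 * a ^ 4 * ((deriv y (-p * a)) ^ 2 + y (-p * a) * deriv (deriv y) (-p * a)) with hF3
  have hd1 : ∀ p : ℝ, HasDerivAt F (F2 p) p := by
    intro p
    have hyc : HasDerivAt (fun q : ℝ => y (-q * a)) (deriv y (-p * a) * (-1 * a)) p :=
      (hy1 (-p * a)).hasDerivAt.comp p (hinner p)
    have hsq := hyc.pow 2
    have h1 : HasDerivAt (fun q : ℝ => q / (2 * t)) (1 / (2 * t)) p :=
      (hasDerivAt_id p).div_const (2 * t)
    have := h1.sub (hsq.const_mul (t ^ (-(2/3) : ℝ)))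
    refine this.congr_deriv ?_
    rw [hb]
    push_cast
    ring
  have hd2 : ∀ p : ℝ, HasDerivAt F2 (F3 p) p := by
    intro p
    have hyc : HasDerivAt (fun q : ℝ => y (-q * a) * deriv y (-q * a))
        ((deriv y (-p * a) * deriv y (-p * a) + y (-p * a) * deriv (deriv y) (-p * a)) * (-1 * a)) p :=
      by have hm := ((hy1 (-p * a)).hasDerivAt.mul (hy2 (-p * a)).hasDerivAt); exact hm.comp p (hinner p)
    have := (hyc.const_mul (2 * a ^ 3)).const_add (1 / (2 * t))
    refine this.congr_deriv ?_
    ring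
  have hd3 : ∀ p : ℝ, HasDerivAt F3
      (2 * a ^ 5 * (3 * deriv y (-p * a) * deriv (deriv y) (-p * a)
        + y (-p * a) * (y (-p * a) + (-p * a) * deriv y (-p * a)
          + 6 * (y (-p * a)) ^ 2 * deriv y (-p * a)))) p := by
    intro p
    have hg : HasDerivAt (fun z : ℝ => (deriv y z) ^ 2 + y z * deriv (deriv y) z)
        (2 * deriv y (-p * a) ^ 1 * deriv (deriv y) (-p * a)
          + (deriv y (-p * a) * deriv (deriv y) (-p * a)
            + y (-p * a) * (y (-p * a) + (-p * a) * deriv y (-p * a)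
              + 6 * (y (-p * a)) ^ 2 * deriv y (-p * a)))) (-p * a) := by
      exact ((hy2 (-p * a)).hasDerivAt.pow 2).add
        ((hy1 (-p * a)).hasDerivAt.mul (hD3 (-p * a)))
    have := (hg.comp p (hinner p)).const_mul (-2 * a ^ 4)
    refine this.congr_deriv ?_
    ring
  -- identify u in x with F
  have hux : (fun x' => u x' t) = F := funext fun p => hu p t ht
  -- time derivative
  have hGt : HasDerivAt (fun s : ℝ => x / (2 * s) - s ^ (-(2/3) : ℝ) * (y (-x * s ^ (-(1/3) : ℝ))) ^ 2)
      ((0 * (2 * t) - x * 2) / (2 * t) ^ 2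
        - ((-(2/3) * t ^ ((-(2/3):ℝ) - 1)) * (y (-x * a)) ^ 2
          + t ^ (-(2/3) : ℝ) * (2 * y (-x * a) ^ 1 * (deriv y (-x * a) * (-x * (-(1/3) * t ^ ((-(1/3):ℝ) - 1))))))) t := by
    have hden : HasDerivAt (fun s : ℝ => 2 * s) 2 t := by
      simpa using (hasDerivAt_id t).const_mul (2:ℝ)
    have h1 : HasDerivAt (fun s : ℝ => x / (2 * s)) ((0 * (2 * t) - x * 2) / (2 * t) ^ 2) t :=
      (hasDerivAt_const t x).div hden (by positivity)
    have hr2 : HasDerivAt (fun s : ℝ => s ^ (-(2/3) : ℝ)) (-(2/3) * t ^ ((-(2/3):ℝ) - 1)) t :=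
      Real.hasDerivAt_rpow_const (Or.inl ht')
    have hr1 : HasDerivAt (fun s : ℝ => -x * s ^ (-(1/3) : ℝ)) (-x * (-(1/3) * t ^ ((-(1/3):ℝ) - 1))) t :=
      (Real.hasDerivAt_rpow_const (p := (-(1/3) : ℝ)) (Or.inl ht')).const_mul (-x)
    have hyc : HasDerivAt (fun s : ℝ => y (-x * s ^ (-(1/3) : ℝ)))
        (deriv y (-x * a) * (-x * (-(1/3) * t ^ ((-(1/3):ℝ) - 1)))) t :=
      (hy1 (-x * a)).hasDerivAt.comp t hr1
    exact h1.sub (hr2.mul (hyc.pow 2))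
  have hut : deriv (fun s => u x s) t
      = (0 * (2 * t) - x * 2) / (2 * t) ^ 2
        - ((-(2/3) * t ^ ((-(2/3):ℝ) - 1)) * (y (-x * a)) ^ 2
          + t ^ (-(2/3) : ℝ) * (2 * y (-x * a) ^ 1 * (deriv y (-x * a) * (-x * (-(1/3) * t ^ ((-(1/3):ℝ) - 1)))))) := by
    have hev : (fun s => u x s) =ᶠ[nhds t] (fun s : ℝ => x / (2 * s) - s ^ (-(2/3) : ℝ) * (y (-x * s ^ (-(1/3) : ℝ))) ^ 2) := by
      filter_upwards [isOpen_Ioi.mem_nhds ht] with s hs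
      exact hu x s hs
    rw [hev.deriv_eq]
    exact hGt.deriv
  -- spatial derivatives of u
  have hdF : deriv F = F2 := funext fun p => (hd1 p).deriv
  have hdF2 : deriv F2 = F3 := funext fun p => (hd2 p).deriv
  have hit : iteratedDeriv 3 (fun x' => u x' t) x
      = 2 * a ^ 5 * (3 * deriv y (-x * a) * deriv (deriv y) (-x * a)
        + y (-x * a) * (y (-x * a) + (-x * a) * deriv y (-x * a)
          + 6 * (y (-x * a)) ^ 2 * deriv y (-x * a))) := by
    rw [hux]
    rw [show (3 : ℕ) = 2 + 1 from rfl, iteratedDeriv_succ, show iteratedDeriv 2 F = iteratedDeriv (1 + 1) F from rfl,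
      iteratedDeriv_succ, iteratedDeriv_one, hdF, hdF2]
    exact (hd3 x).deriv
  have hux' : deriv (fun x' => u x' t) x = F2 x := by rw [hux, hdF]
  have hts : t = (a ^ 3)⁻¹ := eq_inv_of_mul_eq_one_left (by linarith [mul_comm (a ^ 3) t, hta] : t * a ^ 3 = 1)
  have ha0 : a ≠ 0 := by
    intro h
    rw [h] at hta
    norm_num at hta
  rw [hut, hit, hux', hu x t ht, hF2, hPII (-x * a), hb, h4, h5, ← ha, hts]
  field_simp
  ring
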